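/- arXiv:0904.2872 — 2 statements merged into one kernel-verified Lean document; each statement's English description precedes it below -/
import Mathlib

section
/- If u is a word over {0,1,2} with |u| ≥ 3 that is a factor of the Tribonacci word, then |τ(u)| ≥ |u| + 2, where τ is the Tribonacci morphism. -/
/-- The Tribonacci morphism τ: 0↦01, 1↦02, 2↦0, extended to words. -/
def tau : List (Fin 3) → List (Fin 3) :=
  fun w => w.flatMap (fun a => if a = 0 then [0, 1] else if a = 1 then [0, 2] else [0])

lemma tau_cons0 (w) : tau ((0 : Fin 3) :: w) = 0 :: 1 :: tau w := by simp [tau]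
lemma tau_cons1 (w) : tau ((1 : Fin 3) :: w) = 0 :: 2 :: tau w := by simp [tau]
lemma tau_cons2 (w) : tau ((2 : Fin 3) :: w) = 0 :: tau w := by simp [tau]
lemma tau_append (s t) : tau (s ++ t) = tau s ++ tau t := by simp [tau]


lemma fin3_cases : ∀ a : Fin 3, a = 0 ∨ a = 1 ∨ a = 2 := by decide

lemma hd0 (w : List (Fin 3)) : (tau w).getD 0 0 = 0 := by
  cases w with
  | nil => rfl
  | cons a w => rcases fin3_cases a with rfl | rfl | rfl <;>
      simp [tau_cons0, tau_cons1, tau_cons2]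

lemma len_tau (w : List (Fin 3)) : w.length ≤ (tau w).length := by
  induction w with
  | nil => simp [tau]
  | cons a w ih =>
    rcases fin3_cases a with rfl | rfl | rfl <;>
      simp [tau_cons0, tau_cons1, tau_cons2] <;> omega

lemma no22 (w : List (Fin 3)) (n : ℕ) :
    ¬((tau w).getD n 0 = 2 ∧ (tau w).getD (n+1) 0 = 2) := by
  induction w generalizing n with
  | nil => simp [tau]
  | cons a w ih =>
    rcases fin3_cases a with rfl | rfl | rfl <;> rcases n with _ | _ | n <;>
      simp only [tau_cons0, tau_cons1, tau_cons2, List.getD_cons_zero,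
        List.getD_cons_succ, hd0] <;>
      first
        | exact ih _
        | simp

lemma no11 (w : List (Fin 3)) (n : ℕ) :
    ¬((tau w).getD n 0 = 1 ∧ (tau w).getD (n+1) 0 = 1) := by
  induction w generalizing n with
  | nil => simp [tau]
  | cons a w ih =>
    rcases fin3_cases a with rfl | rfl | rfl <;> rcases n with _ | _ | n <;>
      simp only [tau_cons0, tau_cons1, tau_cons2, List.getD_cons_zero,
        List.getD_cons_succ, hd0] <;>
      first
        | exact ih _
        | simp

lemma no2x2 (w : List (Fin 3))
    (H : ∀ k, ¬(w.getD k 0 = 1 ∧ w.getD (k+1) 0 = 1)) (n : ℕ) :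
    ¬((tau w).getD n 0 = 2 ∧ (tau w).getD (n+2) 0 = 2) := by
  induction w generalizing n with
  | nil => simp [tau]
  | cons a w ih =>
    have H' : ∀ k, ¬(w.getD k 0 = 1 ∧ w.getD (k+1) 0 = 1) := by
      intro k
      have := H (k+1)
      simpa using this
    rcases fin3_cases a with rfl | rfl | rfl <;> rcases n with _ | _ | n <;>
      simp only [tau_cons0, tau_cons1, tau_cons2, List.getD_cons_zero,
        List.getD_cons_succ, hd0] <;>
      first
        | exact ih H' _
        | simp
    -- remaining: a = 1, n = 1 case
    intro h
    have h' : (tau w).getD 1 0 = 2 := by rw [List.getD_eq_getElem?_getD]; exact h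
    clear h
    cases w with
    | nil => simp [tau] at h'
    | cons b w' =>
      have hb : b ≠ 1 := by
        have := H 0
        simp only [List.getD_cons_zero, List.getD_cons_succ] at this
        intro hb1; exact this ⟨trivial, hb1⟩
      rcases fin3_cases b with rfl | rfl | rfl
      · simp [tau_cons0] at h'
      · exact hb rfl
      · rw [tau_cons2, List.getD_cons_succ, hd0] at h'
        exact absurd h' (by decide)

/-- The Tribonacci word, the fixed point of τ starting with 0.
Since τⁿ(0) is a prefix of τⁿ⁺¹(0) and |τ^(n+1)(0)| > n, this is well defined. -/
def trib : ℕ → Fin 3 := fun n => (tau^[n + 1] [0]).getD n 0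

lemma tau_prefix {s t : List (Fin 3)} (h : s <+: t) : tau s <+: tau t := by
  obtain ⟨r, rfl⟩ := h
  rw [tau_append]
  exact List.prefix_append _ _

lemma iter_prefix (m : ℕ) {s t : List (Fin 3)} (h : s <+: t) :
    tau^[m] s <+: tau^[m] t := by
  induction m generalizing s t with
  | zero => simpa using h
  | succ m ih => rw [Function.iterate_succ_apply, Function.iterate_succ_apply]
                 exact ih (tau_prefix h)

lemma W_mono {m m' : ℕ} (h : m ≤ m') : tau^[m] [(0 : Fin 3)] <+: tau^[m'] [0] := by
  induction m' with
  | zero => rw [Nat.le_zero.mp h]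
  | succ k ih =>
    rcases Nat.lt_or_ge m (k+1) with hlt | hge
    · refine (ih (by omega)).trans ?_
      rw [Function.iterate_succ_apply]
      exact iter_prefix k (by simp [tau])
    · rw [show m = k+1 by omega]
  
lemma W_head (n : ℕ) : ∃ r, tau^[n] [(0 : Fin 3)] = 0 :: r := by
  induction n with
  | zero => exact ⟨[], rfl⟩
  | succ k ih =>
    obtain ⟨r, hr⟩ := ih
    rw [Function.iterate_succ_apply', hr, tau_cons0]
    exact ⟨1 :: tau r, rfl⟩

lemma len_W (n : ℕ) : n + 1 ≤ (tau^[n] [(0 : Fin 3)]).length := by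
  induction n with
  | zero => simp
  | succ k ih =>
    obtain ⟨r, hr⟩ := W_head k
    rw [Function.iterate_succ_apply', hr, tau_cons0]
    have := len_tau r
    rw [hr] at ih
    simp only [List.length_cons] at *
    omega

lemma stab {n m : ℕ} (h : n + 1 ≤ m) : (tau^[m] [(0 : Fin 3)]).getD n 0 = trib n := by
  obtain ⟨r, hr⟩ := W_mono h
  have hlen : n < (tau^[n+1] [(0 : Fin 3)]).length := by have := len_W (n+1); omega
  rw [trib, ← hr, List.getD_append _ _ _ _ hlen]

lemma keyAdj (n : ℕ) : ¬(trib n = 2 ∧ trib (n + 1) = 2) := by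
  rw [← stab (show n + 1 ≤ n + 3 by omega), ← stab (show (n+1) + 1 ≤ n + 3 by omega)]
  rw [Function.iterate_succ_apply']
  exact no22 _ n

lemma key2 (n : ℕ) : ¬(trib n = 2 ∧ trib (n + 2) = 2) := by
  rw [← stab (show n + 1 ≤ n + 3 by omega), ← stab (show (n+2) + 1 ≤ n + 3 by omega)]
  rw [Function.iterate_succ_apply']
  refine no2x2 _ ?_ n
  rw [Function.iterate_succ_apply']
  exact no11 _

/-- `u` is a (finite, contiguous) factor of the Tribonacci word. -/
def IsFactor (u : List (Fin 3)) : Prop :=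
  ∃ i : ℕ, u = (List.range u.length).map (fun j => trib (i + j))

theorem tau_length_growth (u : List (Fin 3)) (hu : IsFactor u) (h3 : 3 ≤ u.length) :
    u.length + 2 ≤ (tau u).length := by
  obtain ⟨i, hu⟩ := hu
  have hget : ∀ j, j < u.length → u.getD j 0 = trib (i + j) := by
    intro j hj
    conv_lhs => rw [hu]
    rw [List.getD_eq_getElem _ _ (by simpa using hj)]
    simp
  rcases u with _ | ⟨a, _ | ⟨b, _ | ⟨c, r⟩⟩⟩ <;> simp at h3
  have ha : a = trib i := by have := hget 0 (by simp); simpa using this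
  have hb : b = trib (i+1) := by have := hget 1 (by simp); simpa using this
  have hc : c = trib (i+2) := by have := hget 2 (by simp); simpa using this
  have hab := keyAdj i
  have hbc := keyAdj (i+1)
  have hac := key2 i
  rw [← ha, ← hb] at hab
  rw [← hb, ← hc] at hbc
  rw [← ha, ← hc] at hac
  have hr := len_tau r
  clear hget hu ha hb hc
  rcases fin3_cases a with rfl | rfl | rfl <;> rcases fin3_cases b with rfl | rfl | rfl <;>
    rcases fin3_cases c with rfl | rfl | rfl <;>
    simp [tau_cons0, tau_cons1, tau_cons2] at * <;> omega
end

section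
/- For every n ≥ 1, the Tribonacci word has exactly one right special factor of length n-1, i.e., exactly one factor w of length n-1 such that wa is a factor for at least two distinct letters a; moreover for this w all three of w0, w1, w2 are factors of t. -/
/--  04:15:21 up 2 min,  0 user,  load average: 0.00, 0.00, 0.00
USER     TTY      FROM             LOGIN@   IDLE   JCPU   PCPU WHAT is a right special factor of the Tribonacci word. -/
def RightSpecial (w : List (Fin 3)) : Prop :=
  IsFactor w ∧ ∃ a b : Fin 3, a ≠ b ∧ IsFactor (w ++ [a]) ∧ IsFactor (w ++ [b])

/-- prefixes -/
def P (k : ℕ) : List (Fin 3) := tau^[k] [0]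

lemma tau_append_s14 (l l' : List (Fin 3)) : tau (l ++ l') = tau l ++ tau l' := by
  simp [tau]

lemma tau_cons (a : Fin 3) (l : List (Fin 3)) :
    tau (a :: l) = (if a = 0 then [0, 1] else if a = 1 then [0, 2] else [0]) ++ tau l := by
  simp [tau]

lemma tau_nil : tau [] = [] := rfl

lemma tau_cons0_s14 (l : List (Fin 3)) : ∃ r, tau l ++ [0] = 0 :: r := by
  cases l with
  | nil => exact ⟨[], rfl⟩
  | cons a l =>
    rw [tau_cons]
    fin_cases a <;> simp

lemma tau_len_ge (l : List (Fin 3)) : l.length ≤ (tau l).length := by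
  induction l with
  | nil => simp [tau]
  | cons a l ih =>
    rw [tau_cons]
    fin_cases a <;> simp <;> omega

lemma tau_mono {l l' : List (Fin 3)} (h : l <+: l') : tau l <+: tau l' := by
  obtain ⟨r, rfl⟩ := h
  exact ⟨tau r, (tau_append_s14 l r).symm⟩

lemma P_succ (k : ℕ) : P (k + 1) = tau (P k) := by
  simp [P, Function.iterate_succ_apply']

lemma P_head (k : ℕ) : ∃ r, P k = 0 :: r := by
  induction k with
  | zero => exact ⟨[], rfl⟩
  | succ k ih =>
    obtain ⟨r, hr⟩ := ih
    rw [P_succ, hr, tau_cons]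
    simp

lemma P_len_lt (k : ℕ) : (P k).length < (P (k + 1)).length := by
  obtain ⟨r, hr⟩ := P_head k
  rw [P_succ, hr, tau_cons]
  have := tau_len_ge r
  simp; omega

lemma P_len_ge (k : ℕ) : k + 1 ≤ (P k).length := by
  induction k with
  | zero => simp [P]
  | succ k ih => have := P_len_lt k; omega

lemma P_prefix_succ (k : ℕ) : P k <+: P (k + 1) := by
  induction k with
  | zero => exact ⟨[1], rfl⟩
  | succ k ih => rw [P_succ, P_succ]; exact tau_mono ih

lemma P_prefix {k m : ℕ} (h : k ≤ m) : P k <+: P m := by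
  induction m with
  | zero => simp_all
  | succ m ih =>
    rcases Nat.lt_or_ge k (m+1) with h' | h'
    · exact (ih (by omega)).trans (P_prefix_succ m)
    · have : k = m + 1 := by omega
      subst this; exact List.prefix_refl _

lemma getD_of_prefix {l l' : List (Fin 3)} (h : l <+: l') {n : ℕ} (hn : n < l.length) :
    l.getD n 0 = l'.getD n 0 := by
  obtain ⟨r, rfl⟩ := h
  rw [List.getD_append _ _ _ _ hn]

lemma trib_eq_P {k n : ℕ} (hn : n < (P k).length) : (P k).getD n 0 = trib n := by
  show _ = (P (n+1)).getD n 0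
  rcases Nat.le_total k (n+1) with h | h
  · exact getD_of_prefix (P_prefix h) hn
  · exact (getD_of_prefix (P_prefix h) (by have := P_len_ge (n+1); omega)).symm

lemma factor_iff (u : List (Fin 3)) : IsFactor u ↔ ∃ k, u <:+: P k := by
  constructor
  · rintro ⟨i, hu⟩
    set k := i + u.length with hk
    have hlen : i + u.length < (P k).length := by
      have := P_len_ge k; omega
    have heq : u = ((P k).drop i).take u.length := by
      apply List.ext_getElem
      · rw [hu]; simp; omega
      · intro j h1 h2
        rw [List.getElem_take, List.getElem_drop]
        calc u[j] = u.getD j 0 := (List.getD_eq_getElem _ _ h1).symm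
          _ = trib (i + j) := by
              rw [hu, List.getD_eq_getElem _ _ (by simpa using h1)]; simp
          _ = (P k).getD (i + j) 0 := (trib_eq_P (by omega)).symm
          _ = (P k)[i + j] := List.getD_eq_getElem _ _ (by omega)
    have hinf : ((P k).drop i).take u.length <:+: P k :=
      ((List.take_prefix _ _).isInfix).trans ((List.drop_suffix _ _).isInfix)
    rw [← heq] at hinf
    exact ⟨k, hinf⟩
  · rintro ⟨k, s, t, hst⟩
    refine ⟨s.length, ?_⟩
    apply List.ext_getElem
    · simp
    · intro j h1 h2
      simp only [List.getElem_map, List.getElem_range]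
      have h3 : (P k).getD (s.length + j) 0 = trib (s.length + j) :=
        trib_eq_P (by rw [← hst]; simp; omega)
      rw [← hst, List.append_assoc, List.getD_append_right _ _ _ _ (by omega)] at h3
      simp only [Nat.add_sub_cancel_left] at h3
      rw [List.getD_append _ _ _ _ h1] at h3
      rw [← h3, List.getD_eq_getElem _ _ h1]

lemma isFactor_of_infix {u z : List (Fin 3)} (h : u <:+: z) (hz : IsFactor z) : IsFactor u := by
  rw [factor_iff] at *
  obtain ⟨k, hk⟩ := hz
  exact ⟨k, h.trans hk⟩

/-- Any factor occurs in some `P (k+1)` with a nonempty remainder on the right. -/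
lemma infix_proper {z : List (Fin 3)} {k : ℕ} (h : z <:+: P k) :
    ∃ s t, s ++ z ++ t = P (k + 1) ∧ t ≠ [] := by
  obtain ⟨s, t, hst⟩ := h
  obtain ⟨r, hr⟩ := P_prefix_succ k
  refine ⟨s, t ++ r, by rw [← hr, ← hst]; simp, ?_⟩
  intro hnil
  have h1 := P_len_lt k
  have := congrArg List.length hr
  simp at this
  rcases List.append_eq_nil_iff.mp hnil with ⟨h2, h3⟩
  subst h3; simp at this; omega

lemma tau_cons_head (c : Fin 3) (l : List (Fin 3)) : ∃ q, tau (c :: l) = 0 :: q := by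
  rw [tau_cons]; fin_cases c <;> simp

lemma right_ext {z : List (Fin 3)} (hz : IsFactor z) : ∃ c, IsFactor (z ++ [c]) := by
  rw [factor_iff] at hz
  obtain ⟨k, hk⟩ := hz
  obtain ⟨s, t, hst, hne⟩ := infix_proper hk
  obtain ⟨c, t', rfl⟩ := List.exists_cons_of_ne_nil hne
  refine ⟨c, (factor_iff _).2 ⟨k + 1, s, t', ?_⟩⟩
  rw [← hst]; simp

/-- τ images: whenever we have a factor, its τ-image followed by 0 is a factor. -/
lemma factor_tau0 {z : List (Fin 3)} (hz : IsFactor z) : IsFactor (tau z ++ [0]) := by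
  rw [factor_iff] at hz
  obtain ⟨k, hk⟩ := hz
  obtain ⟨s, t, hst, hne⟩ := infix_proper hk
  rcases List.exists_cons_of_ne_nil hne with ⟨c, t', rfl⟩
  obtain ⟨q, hq⟩ := tau_cons_head c t'
  refine (factor_iff _).2 ⟨k + 2, tau s, q, ?_⟩
  have h2 : P (k + 2) = tau (P (k+1)) := P_succ (k+1)
  rw [h2, ← hst, tau_append_s14, tau_append_s14, hq]
  simp

lemma factor_tau {z : List (Fin 3)} (hz : IsFactor z) : IsFactor (tau z) :=
  isFactor_of_infix ⟨[], [0], by simp⟩ (factor_tau0 hz)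

/-- In any τ-image, every pair of adjacent letters has a 0. -/
lemma good_tau (x : List (Fin 3)) : ∀ p q : Fin 3, [p, q] <:+: tau x → p = 0 ∨ q = 0 := by
  induction x with
  | nil => intro p q h; rw [tau_nil] at h; have := h.length_le; simp at this
  | cons a x ih =>
    intro p q h
    have hhead : tau x = [] ∨ ∃ r, tau x = 0 :: r := by
      cases x with
      | nil => left; rfl
      | cons c l => right; exact tau_cons_head c l
    have key : ∀ b : Fin 3, [p, q] <:+: b :: tau x → p = b ∧ q = 0 ∨ p = 0 ∨ q = 0 := by
      intro b hb
      rcases List.infix_cons_iff.mp hb with hpre | hinf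
      · rcases List.cons_prefix_cons.mp hpre with ⟨rfl, h2⟩
        rcases hhead with hnil | ⟨r, hr⟩
        · rw [hnil] at h2; have := h2.length_le; simp at this
        · rw [hr] at h2
          rcases List.cons_prefix_cons.mp h2 with ⟨rfl, _⟩
          exact Or.inl ⟨rfl, rfl⟩
      · exact Or.inr (ih p q hinf)
    rw [tau_cons] at h
    fin_cases a <;> simp only [] at h
    · -- block [0,1]
      rcases List.infix_cons_iff.mp h with hpre | hinf
      · exact Or.inl (List.cons_prefix_cons.mp hpre).1
      · rcases key 1 hinf with ⟨_, hq⟩ | hor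
        · exact Or.inr hq
        · exact hor
    · -- block [0,2]
      rcases List.infix_cons_iff.mp h with hpre | hinf
      · exact Or.inl (List.cons_prefix_cons.mp hpre).1
      · rcases key 2 hinf with ⟨_, hq⟩ | hor
        · exact Or.inr hq
        · exact hor
    · -- block [0]
      rcases List.infix_cons_iff.mp h with hpre | hinf
      · exact Or.inl (List.cons_prefix_cons.mp hpre).1
      · exact ih p q hinf

/-- Adjacent pairs in a factor of the Tribonacci word contain a 0. -/
lemma good_factor {z : List (Fin 3)} (hz : IsFactor z) {p q : Fin 3}
    (h : [p, q] <:+: z) : p = 0 ∨ q = 0 := by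
  rw [factor_iff] at hz
  obtain ⟨k, hk⟩ := hz
  have h2 : [p, q] <:+: P (k + 1) := (h.trans hk).trans (P_prefix_succ k).isInfix
  rw [P_succ] at h2
  exact good_tau _ p q h2

/-- A factor starting with a nonzero letter can be extended to the left by 0. -/
lemma left_ext0 {z : List (Fin 3)} (hz : IsFactor z) (hne : z ≠ [])
    (h0 : z.head? ≠ some 0) : IsFactor (0 :: z) := by
  rw [factor_iff] at hz
  obtain ⟨k, s, t, hst⟩ := hz
  obtain ⟨c, z', rfl⟩ := List.exists_cons_of_ne_nil hne
  simp at h0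
  cases s with
  | nil =>
    exfalso
    obtain ⟨r, hr⟩ := P_head k
    simp at hst
    rw [hr] at hst
    have : c = 0 := by
      have := congrArg (fun l => l.head?) hst
      simpa using this
    exact h0 this
  | cons d s' =>
    rcases (d :: s').eq_nil_or_concat' with hnil | ⟨s'', e, heq⟩
    · simp at hnil
    · rw [heq] at hst
      have hinf : [e, c] <:+: P k := by
        refine ⟨s'', z' ++ t, ?_⟩
        rw [← hst]; simp
      have hkpos : 0 < k := by
        by_contra hk
        have h1 := hinf.length_le
        have : k = 0 := by omega
        rw [this] at h1
        simp [P] at h1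
      have hPk : P k = tau (P (k-1)) := by
        conv_lhs => rw [show k = (k-1) + 1 by omega]
        exact P_succ _
      have he : e = 0 := by
        rcases good_tau (P (k-1)) e c (hPk ▸ hinf) with h | h
        · exact h
        · exact absurd h h0
      refine (factor_iff _).2 ⟨k, s'', t, ?_⟩
      rw [← hst, he]
      simp

lemma blk0 : tau [0] = [0, 1] := rfl
lemma blk1 : tau [1] = [0, 2] := rfl
lemma blk2 : tau [2] = [0] := rfl

/-- Synchronization, prefix version. -/
lemma pre_sync : ∀ (v x : List (Fin 3)), tau v ++ [0] <+: tau x → v <+: x := by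
  intro v
  induction v with
  | nil => intro x _; exact List.nil_prefix
  | cons b v' ih =>
    intro x h
    cases x with
    | nil =>
      exfalso
      rw [tau_nil] at h
      have := h.length_le
      simp at this
    | cons a x' =>
      obtain ⟨e, he⟩ := tau_cons0_s14 v'
      rw [tau_cons b, tau_cons a, List.append_assoc, he] at h
      fin_cases a <;> fin_cases b <;> simp only [show ((⟨0, by omega⟩ : Fin 3)) = 0 from rfl, show ((⟨1, by omega⟩ : Fin 3)) = 1 from rfl, show ((⟨2, by omega⟩ : Fin 3)) = 2 from rfl, Fin.reduceEq, reduceIte, ite_true, ite_false] at h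
      -- nine cases; in each, `h : blk b ++ (0 :: e) <+: blk a ++ tau x'`
      · -- a = 0, b = 0
        simp only [List.cons_append, List.nil_append, List.cons_prefix_cons] at h
        obtain ⟨-, -, h⟩ := h
        have : tau v' ++ [0] <+: tau x' := by rw [he]; exact h
        exact List.cons_prefix_cons.mpr ⟨rfl, ih x' this⟩
      · -- a = 0, b = 1 : [0,2]++ vs [0,1]++
        exfalso
        simp only [List.cons_append, List.nil_append, List.cons_prefix_cons] at h
        exact absurd h.2.1 (by decide)
      · -- a = 0, b = 2 : [0] ++ (0::e) vs [0,1] ++ tau x'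
        exfalso
        simp only [List.cons_append, List.nil_append, List.cons_prefix_cons] at h
        exact absurd h.2.1 (by decide)
      · -- a = 1, b = 0
        exfalso
        simp only [List.cons_append, List.nil_append, List.cons_prefix_cons] at h
        exact absurd h.2.1 (by decide)
      · -- a = 1, b = 1
        simp only [List.cons_append, List.nil_append, List.cons_prefix_cons] at h
        obtain ⟨-, -, h⟩ := h
        have : tau v' ++ [0] <+: tau x' := by rw [he]; exact h
        exact List.cons_prefix_cons.mpr ⟨rfl, ih x' this⟩
      · -- a = 1, b = 2
        exfalso
        simp only [List.cons_append, List.nil_append, List.cons_prefix_cons] at h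
        exact absurd h.2.1 (by decide)
      · -- a = 2, b = 0 : [0,1]++(0::e) vs [0] ++ tau x'
        exfalso
        simp only [List.cons_append, List.nil_append, List.cons_prefix_cons] at h
        have h2 : (1 : Fin 3) :: ((0 : Fin 3) :: e) <+: tau x' := h.2
        cases x' with
        | nil => rw [tau_nil] at h2; have := h2.length_le; simp at this
        | cons c l =>
          obtain ⟨q, hq⟩ := tau_cons_head c l
          rw [hq] at h2
          exact absurd (List.cons_prefix_cons.mp h2).1 (by decide)
      · -- a = 2, b = 1
        exfalso
        simp only [List.cons_append, List.nil_append, List.cons_prefix_cons] at h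
        have h2 : (2 : Fin 3) :: ((0 : Fin 3) :: e) <+: tau x' := h.2
        cases x' with
        | nil => rw [tau_nil] at h2; have := h2.length_le; simp at this
        | cons c l =>
          obtain ⟨q, hq⟩ := tau_cons_head c l
          rw [hq] at h2
          exact absurd (List.cons_prefix_cons.mp h2).1 (by decide)
      · -- a = 2, b = 2
        simp only [List.cons_append, List.nil_append, List.cons_prefix_cons] at h
        obtain ⟨-, h⟩ := h
        have : tau v' ++ [0] <+: tau x' := by rw [he]; exact h
        exact List.cons_prefix_cons.mpr ⟨rfl, ih x' this⟩

/-- Synchronization, infix version. -/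
lemma sync : ∀ (x v : List (Fin 3)), tau v ++ [0] <:+: tau x → v <:+: x := by
  intro x
  induction x with
  | nil =>
    intro v h
    exfalso
    rw [tau_nil] at h
    have := h.length_le
    simp at this
  | cons a x' ih =>
    intro v h
    obtain ⟨e, he⟩ := tau_cons0_s14 v
    have hpre : tau v ++ [0] <+: tau (a :: x') → v <:+: a :: x' :=
      fun hp => (pre_sync v (a :: x') hp).isInfix
    rw [tau_cons a] at h
    fin_cases a <;> simp only [show ((⟨0, by omega⟩ : Fin 3)) = 0 from rfl, show ((⟨1, by omega⟩ : Fin 3)) = 1 from rfl, show ((⟨2, by omega⟩ : Fin 3)) = 2 from rfl, Fin.reduceEq, reduceIte, ite_true, ite_false] at h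
    · rcases List.infix_cons_iff.mp h with hp | h2
      · refine hpre ?_
        rw [tau_cons]
        simp only [show ((⟨0, by omega⟩ : Fin 3)) = 0 from rfl, show ((⟨1, by omega⟩ : Fin 3)) = 1 from rfl, show ((⟨2, by omega⟩ : Fin 3)) = 2 from rfl, Fin.reduceEq, reduceIte, ite_true, ite_false]
        simpa using hp
      · rcases List.infix_cons_iff.mp h2 with hp2 | h3
        · exfalso
          rw [he] at hp2
          exact absurd (List.cons_prefix_cons.mp hp2).1 (by decide)
        · exact List.infix_cons (ih v h3)
    · rcases List.infix_cons_iff.mp h with hp | h2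
      · refine hpre ?_
        rw [tau_cons]
        simp only [show ((⟨0, by omega⟩ : Fin 3)) = 0 from rfl, show ((⟨1, by omega⟩ : Fin 3)) = 1 from rfl, show ((⟨2, by omega⟩ : Fin 3)) = 2 from rfl, Fin.reduceEq, reduceIte, ite_true, ite_false]
        simpa using hp
      · rcases List.infix_cons_iff.mp h2 with hp2 | h3
        · exfalso
          rw [he] at hp2
          exact absurd (List.cons_prefix_cons.mp hp2).1 (by decide)
        · exact List.infix_cons (ih v h3)
    · rcases List.infix_cons_iff.mp h with hp | h2
      · refine hpre ?_
        rw [tau_cons]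
        simp only [show ((⟨0, by omega⟩ : Fin 3)) = 0 from rfl, show ((⟨1, by omega⟩ : Fin 3)) = 1 from rfl, show ((⟨2, by omega⟩ : Fin 3)) = 2 from rfl, Fin.reduceEq, reduceIte, ite_true, ite_false]
        simpa using hp
      · exact List.infix_cons (ih v h2)

lemma desync {z : List (Fin 3)} (h : IsFactor (tau z ++ [0])) : IsFactor z := by
  rw [factor_iff] at h ⊢
  obtain ⟨k, hk⟩ := h
  have h2 : tau z ++ [0] <:+: P (k + 1) := hk.trans (P_prefix_succ k).isInfix
  rw [P_succ] at h2
  exact ⟨k, sync _ _ h2⟩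

/-- Decomposition of factors which start and end with 0. -/
lemma dec_aux : ∀ (n : ℕ) (w : List (Fin 3)), w.length ≤ n →
    (∀ p q : Fin 3, [p, q] <:+: w → p = 0 ∨ q = 0) →
    (∃ w₁, w = 0 :: w₁) → w.getLast? = some 0 →
    ∃ v, w = tau v ++ [0] := by
  intro n
  induction n with
  | zero =>
    intro w hlen _ h0 _
    obtain ⟨w₁, rfl⟩ := h0
    simp at hlen
  | succ n ih =>
    rintro w hlen hg ⟨w₁, rfl⟩ hl
    cases w₁ with
    | nil => exact ⟨[], rfl⟩
    | cons q l =>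
      fin_cases q <;> simp only [show ((⟨0, by omega⟩ : Fin 3)) = 0 from rfl, show ((⟨1, by omega⟩ : Fin 3)) = 1 from rfl, show ((⟨2, by omega⟩ : Fin 3)) = 2 from rfl] at hg hl hlen ⊢
      · -- next letter 0
        obtain ⟨v₁, hv⟩ := ih (0 :: l) (by simp at hlen ⊢; omega)
          (fun p q h => hg p q (h.trans ⟨[0], [], by simp⟩))
          ⟨l, rfl⟩ (by rwa [List.getLast?_cons_cons] at hl)
        refine ⟨2 :: v₁, ?_⟩
        rw [tau_cons]
        simp only [Fin.reduceEq, reduceIte, ite_true, ite_false]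
        rw [hv]
        simp
      · -- next letter 1
        cases l with
        | nil => simp at hl
        | cons c l' =>
          have hc : c = 0 := by
            rcases hg 1 c ⟨[0], l', by simp⟩ with h | h
            · exact absurd h (by decide)
            · exact h
          subst hc
          obtain ⟨v₁, hv⟩ := ih (0 :: l') (by simp at hlen ⊢; omega)
            (fun p q h => hg p q (h.trans ⟨[0, 1], [], by simp⟩))
            ⟨l', rfl⟩ (by rwa [List.getLast?_cons_cons, List.getLast?_cons_cons] at hl)
          refine ⟨0 :: v₁, ?_⟩
          rw [tau_cons]
          simp only [Fin.reduceEq, reduceIte, ite_true, ite_false]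
          rw [hv]
          simp
      · -- next letter 2
        cases l with
        | nil => simp at hl
        | cons c l' =>
          have hc : c = 0 := by
            rcases hg 2 c ⟨[0], l', by simp⟩ with h | h
            · exact absurd h (by decide)
            · exact h
          subst hc
          obtain ⟨v₁, hv⟩ := ih (0 :: l') (by simp at hlen ⊢; omega)
            (fun p q h => hg p q (h.trans ⟨[0, 2], [], by simp⟩))
            ⟨l', rfl⟩ (by rwa [List.getLast?_cons_cons, List.getLast?_cons_cons] at hl)
          refine ⟨1 :: v₁, ?_⟩
          rw [tau_cons]
          simp only [Fin.reduceEq, reduceIte, ite_true, ite_false]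
          rw [hv]
          simp

lemma dec (w : List (Fin 3))
    (hg : ∀ p q : Fin 3, [p, q] <:+: w → p = 0 ∨ q = 0)
    (h0 : ∃ w₁, w = 0 :: w₁) (hl : w.getLast? = some 0) :
    ∃ v, w = tau v ++ [0] :=
  dec_aux w.length w le_rfl hg h0 hl

/-- The canonical right special words. -/
def U : ℕ → List (Fin 3)
  | 0 => []
  | j + 1 => tau (U j) ++ [0]

lemma U_allext : ∀ j (a : Fin 3), IsFactor (U j ++ [a]) := by
  intro j
  induction j with
  | zero =>
    intro a
    fin_cases a <;> exact (factor_iff _).2 ⟨4, by decide⟩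
  | succ j ih =>
    intro a
    have h0 : U (j + 1) ++ [0] = tau (U j ++ [2]) ++ [0] := by
      show (tau (U j) ++ [0]) ++ [0] = _
      rw [tau_append_s14, blk2]
    have h1 : U (j + 1) ++ [1] = tau (U j ++ [0]) := by
      show (tau (U j) ++ [0]) ++ [1] = _
      rw [tau_append_s14, blk0]
      simp
    have h2 : U (j + 1) ++ [2] = tau (U j ++ [1]) := by
      show (tau (U j) ++ [0]) ++ [2] = _
      rw [tau_append_s14, blk1]
      simp
    fin_cases a <;> simp only [show ((⟨0, by omega⟩ : Fin 3)) = 0 from rfl, show ((⟨1, by omega⟩ : Fin 3)) = 1 from rfl, show ((⟨2, by omega⟩ : Fin 3)) = 2 from rfl]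
    · rw [h0]; exact factor_tau0 (ih 2)
    · rw [h1]; exact factor_tau (ih 0)
    · rw [h2]; exact factor_tau (ih 1)

lemma U_factor (j : ℕ) : IsFactor (U j) :=
  isFactor_of_infix ⟨[], [0], by simp⟩ (U_allext j 0)

lemma U_len (j : ℕ) : j ≤ (U j).length := by
  induction j with
  | zero => simp
  | succ j ih =>
    show j + 1 ≤ (tau (U j) ++ [0]).length
    have := tau_len_ge (U j)
    simp; omega

def g : Fin 3 → Fin 3 := fun a => if a = 0 then 2 else if a = 1 then 0 else 1

lemma g_inj : Function.Injective g := by decide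

lemma extmap (v : List (Fin 3)) (a : Fin 3) (h : IsFactor (tau v ++ [0, a])) :
    IsFactor (v ++ [g a]) := by
  fin_cases a <;> simp only [show ((⟨0, by omega⟩ : Fin 3)) = 0 from rfl, show ((⟨1, by omega⟩ : Fin 3)) = 1 from rfl, show ((⟨2, by omega⟩ : Fin 3)) = 2 from rfl] at h
  · -- a = 0 : tau v ++ [0,0] = tau (v ++ [2]) ++ [0]
    show IsFactor (v ++ [2])
    apply desync
    rw [tau_append_s14, blk2]
    simpa using h
  · -- a = 1 : tau v ++ [0,1] = tau (v ++ [0])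
    show IsFactor (v ++ [0])
    have heq : tau (v ++ [0]) = tau v ++ [0, 1] := by rw [tau_append_s14, blk0]
    rw [← heq] at h
    obtain ⟨c, hc⟩ := right_ext h
    have hc0 : c = 0 := by
      rcases good_factor hc (p := 1) (q := c) ⟨tau v ++ [0], [], by rw [heq]; simp⟩ with h' | h'
      · exact absurd h' (by decide)
      · exact h'
    subst hc0
    exact desync hc
  · -- a = 2
    show IsFactor (v ++ [1])
    have heq : tau (v ++ [1]) = tau v ++ [0, 2] := by rw [tau_append_s14, blk1]
    rw [← heq] at h
    obtain ⟨c, hc⟩ := right_ext h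
    have hc0 : c = 0 := by
      rcases good_factor hc (p := 2) (q := c) ⟨tau v ++ [0], [], by rw [heq]; simp⟩ with h' | h'
      · exact absurd h' (by decide)
      · exact h'
    subst hc0
    exact desync hc

lemma last_zero {w : List (Fin 3)} (hne : w ≠ []) {a b : Fin 3} (hab : a ≠ b)
    (ha : IsFactor (w ++ [a])) (hb : IsFactor (w ++ [b])) : w.getLast? = some 0 := by
  rcases w.eq_nil_or_concat' with rfl | ⟨w', c, rfl⟩
  · exact absurd rfl hne
  · have hc : c = 0 := by
      by_contra hc
      have h1 : a = 0 := by
        rcases good_factor ha (p := c) (q := a) ⟨w', [], by simp⟩ with h | h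
        · exact absurd h hc
        · exact h
      have h2 : b = 0 := by
        rcases good_factor hb (p := c) (q := b) ⟨w', [], by simp⟩ with h | h
        · exact absurd h hc
        · exact h
      rw [h1, h2] at hab
      exact hab rfl
    subst hc
    simp

lemma suffix_drop {l₁ l₂ : List (Fin 3)} (h : l₁ <:+ l₂) :
    l₁ = l₂.drop (l₂.length - l₁.length) := by
  obtain ⟨t, rfl⟩ := h
  simp

lemma suffix_eq_of_length {l₁ l₂ l : List (Fin 3)} (h₁ : l₁ <:+ l) (h₂ : l₂ <:+ l)
    (hlen : l₁.length = l₂.length) : l₁ = l₂ := by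
  rw [suffix_drop h₁, suffix_drop h₂, hlen]

lemma U_succ (j : ℕ) : U (j + 1) = tau (U j) ++ [0] := rfl

lemma main : ∀ (m : ℕ) (w : List (Fin 3)), w.length = m → RightSpecial w →
    ∀ j, w <:+ U j ∨ U j <:+ w := by
  intro m
  induction m using Nat.strong_induction_on with
  | _ m ih =>
    intro w hlen hrs j
    cases j with
    | zero => right; exact List.nil_suffix
    | succ j' =>
      rcases Nat.eq_zero_or_pos m with rfl | hm
      · left
        rw [List.length_eq_zero_iff] at hlen
        subst hlen
        exact List.nil_suffix
      obtain ⟨hw, a, b, hab, ha, hb⟩ := hrs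
      have hne : w ≠ [] := by
        intro h; rw [h] at hlen; simp at hlen; omega
      have hlast : w.getLast? = some 0 := last_zero hne hab ha hb
      obtain ⟨w', hw'⟩ : ∃ w', w = w' ++ [0] := by
        rcases w.eq_nil_or_concat' with rfl | ⟨w', c, rfl⟩
        · exact absurd rfl hne
        · rw [List.getLast?_concat] at hlast
          obtain rfl : c = 0 := by injection hlast
          exact ⟨w', rfl⟩
      obtain ⟨d, w₂, hw2⟩ := List.exists_cons_of_ne_nil hne
      fin_cases d <;>
        simp only [show ((⟨0, by omega⟩ : Fin 3)) = 0 from rfl,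
          show ((⟨1, by omega⟩ : Fin 3)) = 1 from rfl,
          show ((⟨2, by omega⟩ : Fin 3)) = 2 from rfl] at hw2
      · -- w starts with 0
        obtain ⟨v, hv⟩ := dec w (fun p q h => good_factor hw h) ⟨w₂, hw2⟩ hlast
        have hva : IsFactor (v ++ [g a]) := by
          apply extmap
          rw [hv] at ha
          simpa using ha
        have hvb : IsFactor (v ++ [g b]) := by
          apply extmap
          rw [hv] at hb
          simpa using hb
        have hrsv : RightSpecial v :=
          ⟨isFactor_of_infix ⟨[], [g a], by simp⟩ hva, g a, g b,
            fun h => hab (g_inj h), hva, hvb⟩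
        have hlenv : v.length < m := by
          have h1 := tau_len_ge v
          have h2 : w.length = (tau v).length + 1 := by rw [hv]; simp
          omega
        rcases ih v.length hlenv v rfl hrsv j' with ⟨y, hy⟩ | ⟨y, hy⟩
        · left
          refine ⟨tau y, ?_⟩
          rw [hv, U_succ, ← hy, tau_append_s14]
          simp
        · right
          refine ⟨tau y, ?_⟩
          rw [hv, U_succ, ← hy, tau_append_s14]
          simp
      · -- w starts with 1
        have hneA : w ++ [a] ≠ [] := by simp
        have hneB : w ++ [b] ≠ [] := by simp
        have hWa : IsFactor (0 :: (w ++ [a])) := by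
          apply left_ext0 ha hneA
          rw [hw2]
          simp
        have hWb : IsFactor (0 :: (w ++ [b])) := by
          apply left_ext0 hb hneB
          rw [hw2]
          simp
        have hW : IsFactor (0 :: w) := isFactor_of_infix ⟨[], [a], by simp⟩ hWa
        have hlastW : (0 :: w).getLast? = some 0 := by
          rw [hw', show (0:Fin 3) :: (w' ++ [0]) = (0 :: w') ++ [0] by simp,
            List.getLast?_concat]
        obtain ⟨V, hV⟩ := dec (0 :: w) (fun p q h => good_factor hW h) ⟨w, rfl⟩ hlastW
        cases V with
        | nil =>
          exfalso
          rw [tau_nil] at hV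
          simp at hV
          exact hne hV
        | cons c V' =>
          have hc : c = 0 := by
            rw [hw2, tau_cons] at hV
            fin_cases c
            · rfl
            · exfalso
              simp only [show ((⟨0, by omega⟩ : Fin 3)) = 0 from rfl,
                show ((⟨1, by omega⟩ : Fin 3)) = 1 from rfl,
                show ((⟨2, by omega⟩ : Fin 3)) = 2 from rfl,
                Fin.reduceEq, reduceIte, ite_true, ite_false] at hV
              simp at hV
            · exfalso
              obtain ⟨e, he⟩ := tau_cons0_s14 V'
              simp only [show ((⟨0, by omega⟩ : Fin 3)) = 0 from rfl,
                show ((⟨1, by omega⟩ : Fin 3)) = 1 from rfl,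
                show ((⟨2, by omega⟩ : Fin 3)) = 2 from rfl,
                Fin.reduceEq, reduceIte, ite_true, ite_false] at hV
              rw [List.append_assoc, he] at hV
              simp at hV
          subst hc
          have hVa : IsFactor ((0 :: V') ++ [g a]) := by
            apply extmap
            have : (0:Fin 3) :: (w ++ [a]) = (tau (0 :: V') ++ [0]) ++ [a] := by
              rw [← hV]; simp
            rw [this] at hWa
            simpa using hWa
          have hVb : IsFactor ((0 :: V') ++ [g b]) := by
            apply extmap
            have : (0:Fin 3) :: (w ++ [b]) = (tau (0 :: V') ++ [0]) ++ [b] := by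
              rw [← hV]; simp
            rw [this] at hWb
            simpa using hWb
          have hrsV : RightSpecial (0 :: V') :=
            ⟨isFactor_of_infix ⟨[], [g a], by simp⟩ hVa, g a, g b,
              fun h => hab (g_inj h), hVa, hVb⟩
          have hlenV : (0 :: V').length < m := by
            have h1 := tau_len_ge V'
            have h2 : (0 :: w).length = (tau (0 :: V')).length + 1 := by rw [hV]; simp
            rw [tau_cons] at h2
            simp only [Fin.reduceEq, reduceIte, ite_true, ite_false] at h2
            simp at h2 ⊢
            omega
          rcases ih _ hlenV (0 :: V') rfl hrsV j' with ⟨y, hy⟩ | ⟨y, hy⟩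
          · left
            refine ⟨tau y ++ [0], ?_⟩
            have : U (j' + 1) = tau y ++ (tau (0 :: V') ++ [0]) := by
              rw [U_succ, ← hy, tau_append_s14]
              simp
            rw [this, ← hV]
            simp
          · -- U j' <:+ 0 :: V'
            have hUsuf : U (j' + 1) <:+ 0 :: w := by
              rw [hV, U_succ, ← hy, tau_append_s14]
              exact ⟨tau y, by simp⟩
            have hwsuf : w <:+ 0 :: w := ⟨[0], rfl⟩
            rcases List.suffix_or_suffix_of_suffix hUsuf hwsuf with h | h
            · right; exact h
            · left; exact h
      · -- w starts with 2
        have hneA : w ++ [a] ≠ [] := by simp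
        have hneB : w ++ [b] ≠ [] := by simp
        have hWa : IsFactor (0 :: (w ++ [a])) := by
          apply left_ext0 ha hneA
          rw [hw2]
          simp
        have hWb : IsFactor (0 :: (w ++ [b])) := by
          apply left_ext0 hb hneB
          rw [hw2]
          simp
        have hW : IsFactor (0 :: w) := isFactor_of_infix ⟨[], [a], by simp⟩ hWa
        have hlastW : (0 :: w).getLast? = some 0 := by
          rw [hw', show (0:Fin 3) :: (w' ++ [0]) = (0 :: w') ++ [0] by simp,
            List.getLast?_concat]
        obtain ⟨V, hV⟩ := dec (0 :: w) (fun p q h => good_factor hW h) ⟨w, rfl⟩ hlastW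
        cases V with
        | nil =>
          exfalso
          rw [tau_nil] at hV
          simp at hV
          exact hne hV
        | cons c V' =>
          have hc : c = 1 := by
            rw [hw2, tau_cons] at hV
            fin_cases c
            · exfalso
              simp only [show ((⟨0, by omega⟩ : Fin 3)) = 0 from rfl,
                show ((⟨1, by omega⟩ : Fin 3)) = 1 from rfl,
                show ((⟨2, by omega⟩ : Fin 3)) = 2 from rfl,
                Fin.reduceEq, reduceIte, ite_true, ite_false] at hV
              simp at hV
            · rfl
            · exfalso
              obtain ⟨e, he⟩ := tau_cons0_s14 V'
              simp only [show ((⟨0, by omega⟩ : Fin 3)) = 0 from rfl,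
                show ((⟨1, by omega⟩ : Fin 3)) = 1 from rfl,
                show ((⟨2, by omega⟩ : Fin 3)) = 2 from rfl,
                Fin.reduceEq, reduceIte, ite_true, ite_false] at hV
              rw [List.append_assoc, he] at hV
              simp at hV
          subst hc
          have hVa : IsFactor ((1 :: V') ++ [g a]) := by
            apply extmap
            have : (0:Fin 3) :: (w ++ [a]) = (tau (1 :: V') ++ [0]) ++ [a] := by
              rw [← hV]; simp
            rw [this] at hWa
            simpa using hWa
          have hVb : IsFactor ((1 :: V') ++ [g b]) := by
            apply extmap
            have : (0:Fin 3) :: (w ++ [b]) = (tau (1 :: V') ++ [0]) ++ [b] := by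
              rw [← hV]; simp
            rw [this] at hWb
            simpa using hWb
          have hrsV : RightSpecial (1 :: V') :=
            ⟨isFactor_of_infix ⟨[], [g a], by simp⟩ hVa, g a, g b,
              fun h => hab (g_inj h), hVa, hVb⟩
          have hlenV : (1 :: V').length < m := by
            have h1 := tau_len_ge V'
            have h2 : (0 :: w).length = (tau (1 :: V')).length + 1 := by rw [hV]; simp
            rw [tau_cons] at h2
            simp only [Fin.reduceEq, reduceIte, ite_true, ite_false] at h2
            simp at h2 ⊢
            omega
          rcases ih _ hlenV (1 :: V') rfl hrsV j' with ⟨y, hy⟩ | ⟨y, hy⟩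
          · left
            refine ⟨tau y ++ [0], ?_⟩
            have : U (j' + 1) = tau y ++ (tau (1 :: V') ++ [0]) := by
              rw [U_succ, ← hy, tau_append_s14]
              simp
            rw [this, ← hV]
            simp
          · have hUsuf : U (j' + 1) <:+ 0 :: w := by
              rw [hV, U_succ, ← hy, tau_append_s14]
              exact ⟨tau y, by simp⟩
            have hwsuf : w <:+ 0 :: w := ⟨[0], rfl⟩
            rcases List.suffix_or_suffix_of_suffix hUsuf hwsuf with h | h
            · right; exact h
            · left; exact h

theorem tribonacci_unique_right_special (n : ℕ) (hn : 1 ≤ n) :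
    (∃! w : List (Fin 3), w.length = n - 1 ∧ RightSpecial w) ∧
    (∀ w : List (Fin 3), w.length = n - 1 → RightSpecial w →
      ∀ a : Fin 3, IsFactor (w ++ [a])) := by
  set m := n - 1 with hm
  set S : List (Fin 3) := (U m).drop ((U m).length - m) with hS
  have hUlen := U_len m
  have hSlen : S.length = m := by
    rw [hS, List.length_drop]
    omega
  have hSsuf : S <:+ U m := List.drop_suffix _ _
  have hSext : ∀ a : Fin 3, IsFactor (S ++ [a]) := by
    intro a
    obtain ⟨y, hy⟩ := hSsuf
    exact isFactor_of_infix ⟨y, [], by rw [← hy]; simp⟩ (U_allext m a)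
  have hSrs : RightSpecial S :=
    ⟨isFactor_of_infix ⟨[], [0], by simp⟩ (hSext 0), 0, 1, by decide, hSext 0, hSext 1⟩
  have huniq : ∀ w : List (Fin 3), w.length = m → RightSpecial w → w = S := by
    intro w hwlen hwrs
    rcases main m w hwlen hwrs m with h | h
    · exact suffix_eq_of_length h hSsuf (by rw [hwlen, hSlen])
    · have h1 : (U m).length ≤ m := by
        have := h.length_le
        omega
      have h2 : U m = S := by
        rw [hS]
        have : (U m).length - m = 0 := by omega
        rw [this]
        simp
      rw [← h2]
      exact suffix_eq_of_length h (List.suffix_refl w) (by omega) |>.symm ▸ rfl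
  constructor
  · exact ⟨S, ⟨hSlen, hSrs⟩, fun w ⟨h1, h2⟩ => huniq w h1 h2⟩
  · intro w h1 h2 a
    rw [huniq w h1 h2]
    exact hSext a
end
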